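/- Let X be a real vector space equipped with a seminorm N, let X_H ⊆ X_h ⊆ X be linear subspaces, let Y be a real Hilbert space with a closed subspace V, and let b : X × Y → ℝ be a bilinear form satisfying the discrete inf-sup condition N(x) ≤ sup_{q ∈ V, q ≠ 0} b(x, q)/‖q‖ for all x ∈ X_h. Let u ∈ X, u_H ∈ X_H, u_h ∈ X_h and p ∈ V be such that b(u_h − u_H, q) = ⟨p, q⟩ for all q ∈ V, and assume the saturation condition N(u − u_h) ≤ η N(u − u_H) for some η ∈ (0,1). Then N(u − u_H) ≤ (1/(1−η)) ‖p‖. -/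
import Mathlib

open RealInnerProductSpace

/-- Abstract reliability estimate for the adaptive least-squares method: under the
discrete inf-sup condition on `X_h`, the Galerkin orthogonality
`b(u_h − u_H, q) = ⟨p, q⟩` for all `q ∈ V`, and the saturation condition
`N(u − u_h) ≤ η N(u − u_H)` with `η ∈ (0,1)`, there holds
`N(u − u_H) ≤ (1/(1−η)) ‖p‖`. -/
theorem abstract_reliability_estimate
    {X : Type*} [AddCommGroup X] [Module ℝ X] (N : Seminorm ℝ X)
    {Y : Type*} [NormedAddCommGroup Y] [InnerProductSpace ℝ Y]
    (XH Xh : Submodule ℝ X) (hXHh : XH ≤ Xh)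
    (V : Submodule ℝ Y) (hV : IsClosed (V : Set Y))
    (b : X →ₗ[ℝ] Y →ₗ[ℝ] ℝ)
    (hinfsup : ∀ x ∈ Xh,
      N x ≤ ⨆ q : {q : Y // q ∈ V ∧ q ≠ 0}, b x (q : Y) / ‖(q : Y)‖)
    (u uH uh : X) (huH : uH ∈ XH) (huh : uh ∈ Xh)
    (p : Y) (hpV : p ∈ V)
    (hgal : ∀ q ∈ V, b (uh - uH) q = ⟪p, q⟫)
    (η : ℝ) (hη : η ∈ Set.Ioo (0 : ℝ) 1)
    (hsat : N (u - uh) ≤ η * N (u - uH)) :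
    N (u - uH) ≤ (1 / (1 - η)) * ‖p‖ := by
  obtain ⟨hη0, hη1⟩ := hη
  have h1 : N (uh - uH) ≤ ‖p‖ := by
    refine (hinfsup _ (Submodule.sub_mem Xh huh (hXHh huH))).trans ?_
    refine Real.iSup_le ?_ (norm_nonneg p)
    rintro ⟨q, hqV, hq0⟩
    simp only
    rw [hgal q hqV, div_le_iff₀ (norm_pos_iff.mpr hq0)]
    exact real_inner_le_norm p q
  have h2 : N (u - uH) ≤ N (u - uh) + N (uh - uH) := by
    have : u - uH = (u - uh) + (uh - uH) := by abel
    rw [this]; exact map_add_le_add N _ _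
  have hN0 : 0 ≤ N (u - uH) := apply_nonneg N _
  have key : (1 - η) * N (u - uH) ≤ ‖p‖ := by nlinarith
  rw [div_mul_eq_mul_div, le_div_iff₀ (by linarith), one_mul]
  linarith
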